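/- The homology of the chain complex (M, ∂_*) is isomorphic to ℤ ⊕ ℤ, with generators given by the homology classes of the closed elements (0, o₀) and (0, o₊) − (1, o₋). In particular, (0, o₊) − (1, o₋) lies in the kernel of ∂_*, and ker(∂_*)/im(∂_*) ≅ ℤ². -/

import Mathlib

/-- The four-element label set `O = {0, 1, -1, {1,-1}}`. -/
inductive OLabel : Type
  | o0 | op | om | o2
deriving DecidableEq

open Finsupp

/-- The value of the differential `∂_*` on a generator of the free `ℤ`-module on `ℤ × O`. -/
noncomputable def bnd : ℤ × OLabel → (ℤ × OLabel →₀ ℤ)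
  | (k, .o0) => 0
  | (k, .op) => single (k, .o0) 1 + single (k + 1, .o0) 1
  | (k, .om) => single (k, .o0) 1 + single (k - 1, .o0) 1
  | (k, .o2) => single (k, .om) 1 + single (k + 1, .om) 1
      - single (k, .op) 1 - single (k - 1, .op) 1

/-- The `ℤ`-linear differential `∂_*` on the free `ℤ`-module generated by `ℤ × O`. -/
noncomputable def dstar : (ℤ × OLabel →₀ ℤ) →ₗ[ℤ] (ℤ × OLabel →₀ ℤ) :=
  Finsupp.lift (ℤ × OLabel →₀ ℤ) ℤ (ℤ × OLabel) bnd

/-- The closed generator `(0, o₀)`. -/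
noncomputable def gen0 : ℤ × OLabel →₀ ℤ := Finsupp.single (0, .o0) 1

/-- The closed element `(0, o₊) − (1, o₋)`. -/
noncomputable def gen1 : ℤ × OLabel →₀ ℤ :=
  Finsupp.single (0, .op) 1 - Finsupp.single (1, .om) 1

noncomputable section

abbrev M := ℤ × OLabel →₀ ℤ

lemma lift_single {N : Type*} [AddCommGroup N] [Module ℤ N] (f : ℤ × OLabel → N)
    (a : ℤ × OLabel) (c : ℤ) :
    (Finsupp.lift N ℤ (ℤ × OLabel) f) (Finsupp.single a c) = c • f a := by
  rw [Finsupp.lift_apply, Finsupp.sum_single_index]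
  · exact (int_smul_eq_zsmul _ c (f a)).symm ▸ rfl
  · module

lemma dstar_single (a : ℤ × OLabel) (c : ℤ) :
    dstar (Finsupp.single a c) = c • bnd a := lift_single bnd a c

lemma dstar_single1 (a : ℤ × OLabel) :
    dstar (Finsupp.single a 1) = bnd a := by rw [dstar_single]; module

/-- sign (-1)^k -/
def sgn : ℤ → ℤ := fun k => (((-1:ℤˣ)^k : ℤˣ) : ℤ)

@[simp] lemma sgn_zero : sgn 0 = 1 := by simp [sgn]
lemma sgn_add_one (k : ℤ) : sgn (k+1) = -sgn k := by simp [sgn, zpow_add]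
lemma sgn_sub_one (k : ℤ) : sgn (k-1) = -sgn k := by
  have := sgn_add_one (k-1); simp at this; omega

/-- s on degree-0 generators -/
def yA : ℕ → M
  | 0 => 0
  | n+1 => Finsupp.single (((n:ℤ)+1), .om) 1 - yA n

def yB : ℕ → M
  | 0 => Finsupp.single (-1, .op) 1
  | n+1 => Finsupp.single ((-(n:ℤ)-2), .op) 1 - yB n

def y : ℤ → M
  | Int.ofNat n => yA n
  | Int.negSucc n => yB n

@[simp] lemma y_zero : y 0 = 0 := rfl

lemma y_succ (n : ℕ) : y ((n:ℤ)+1) = Finsupp.single (((n:ℤ)+1), .om) 1 - y (n:ℤ) := by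
  show y (Int.ofNat (n+1)) = _
  rfl

lemma y_pred (n : ℕ) : y (-(n:ℤ)-1) = Finsupp.single ((-(n:ℤ)-1), .op) 1 - y (-(n:ℤ)) := by
  cases n with
  | zero => show y (Int.negSucc 0) = _; simp [y, yB, yA]
  | succ m =>
      show y (Int.negSucc (m+1)) = _
      have h1 : (-(↑(m+1):ℤ)-1) = (-(m:ℤ)-2) := by push_cast; ring
      have h2 : (-(↑(m+1):ℤ)) = Int.negSucc m := by simp [Int.negSucc_eq]
      rw [h1, h2]
      rfl

/-- s on om generators -/
def smB : ℕ → M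
  | 0 => Finsupp.single ((0:ℤ), .o2) 1
  | n+1 => Finsupp.single ((-(n:ℤ)-1), .o2) 1 - smB n

def sm : ℤ → M
  | Int.ofNat 0 => smB 0
  | Int.ofNat (_+1) => 0
  | Int.negSucc n => smB (n+1)

@[simp] lemma sm_zero : sm 0 = Finsupp.single ((0:ℤ), .o2) 1 := rfl

lemma sm_pos (n : ℕ) : sm ((n:ℤ)+1) = 0 := by
  show sm (Int.ofNat (n+1)) = 0; rfl

lemma sm_pred (n : ℕ) :
    sm (-(n:ℤ)-1) = Finsupp.single ((-(n:ℤ)-1), .o2) 1 - sm (-(n:ℤ)) := by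
  cases n with
  | zero => show sm (Int.negSucc 0) = _; simp [sm, smB]
  | succ m =>
      show sm (Int.negSucc (m+1)) = _
      have h1 : (-(↑(m+1):ℤ)-1) = (-(m:ℤ)-2) := by push_cast; ring
      have h2 : (-(↑(m+1):ℤ)) = Int.negSucc m := by simp [Int.negSucc_eq]
      rw [h2]
      show smB (m+2) = _
      show Finsupp.single ((-(↑(m+1):ℤ)-1), .o2) 1 - smB (m+1) = _
      rfl

/-- s on op generators -/
def spA : ℕ → M
  | 0 => 0
  | n+1 => -Finsupp.single (((n:ℤ)+1), .o2) 1 - spA n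

def sp : ℤ → M
  | Int.ofNat n => spA n
  | Int.negSucc _ => 0

@[simp] lemma sp_zero : sp 0 = 0 := rfl

lemma sp_neg (n : ℕ) : sp (-(n:ℤ)) = 0 := by
  cases n with
  | zero => rfl
  | succ m =>
      have h2 : (-(↑(m+1):ℤ)) = Int.negSucc m := by simp [Int.negSucc_eq]
      rw [h2]; rfl

lemma sp_succ (n : ℕ) : sp ((n:ℤ)+1) = -Finsupp.single (((n:ℤ)+1), .o2) 1 - sp (n:ℤ) := by
  show sp (Int.ofNat (n+1)) = _
  rfl

lemma dy (k : ℤ) : dstar (y k) = Finsupp.single (k,.o0) 1 - sgn k • Finsupp.single ((0:ℤ),.o0) 1 := by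
  induction k using Int.induction_on with
  | zero => simp
  | succ n ih =>
      rw [y_succ, map_sub, dstar_single1, ih, sgn_add_one]
      simp only [bnd, add_sub_cancel_right]
      module
  | pred n ih =>
      rw [y_pred, map_sub, dstar_single1, ih, sgn_sub_one]
      simp only [bnd, sub_add_cancel]
      module

/- primed ℤ-level recurrences -/
lemma y_succ' {k : ℤ} (hk : 0 ≤ k) : y (k+1) = Finsupp.single ((k+1), .om) 1 - y k := by
  obtain ⟨n, rfl⟩ := Int.eq_ofNat_of_zero_le hk; exact y_succ n

lemma y_pred' {k : ℤ} (hk : k ≤ 0) : y (k-1) = Finsupp.single ((k-1), .op) 1 - y k := by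
  obtain ⟨n, rfl⟩ := Int.exists_eq_neg_ofNat hk; exact y_pred n

lemma sm_pos' {k : ℤ} (hk : 1 ≤ k) : sm k = 0 := by
  obtain ⟨n, hn⟩ := Int.eq_ofNat_of_zero_le (by omega : (0:ℤ) ≤ k - 1)
  have h : k = (n:ℤ)+1 := by omega
  rw [h, sm_pos]

lemma sm_pred' {k : ℤ} (hk : k ≤ 0) :
    sm (k-1) = Finsupp.single ((k-1), .o2) 1 - sm k := by
  obtain ⟨n, rfl⟩ := Int.exists_eq_neg_ofNat hk; exact sm_pred n

lemma sp_neg' {k : ℤ} (hk : k ≤ 0) : sp k = 0 := by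
  obtain ⟨n, rfl⟩ := Int.exists_eq_neg_ofNat hk; exact sp_neg n

lemma sp_succ' {k : ℤ} (hk : 0 ≤ k) :
    sp (k+1) = -Finsupp.single ((k+1), .o2) 1 - sp k := by
  obtain ⟨n, rfl⟩ := Int.eq_ofNat_of_zero_le hk; exact sp_succ n

/-- key identity for `om` generators -/
lemma dsm (k : ℤ) : dstar (sm k) =
    Finsupp.single (k,.om) 1 - (if k ≤ 0 then sgn k else 0) • gen1 - y k - y (k-1) := by
  induction k using Int.induction_on with
  | zero =>
      rw [sm_zero, dstar_single1, if_pos (le_refl (0:ℤ)), y_pred' (le_refl (0:ℤ))]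
      norm_num [bnd, gen1]
      module
  | succ n ih =>
      rw [sm_pos' (by omega), if_neg (by omega), y_succ' (by omega)]
      have h : ((n:ℤ)+1-1) = (n:ℤ) := by ring
      rw [h, map_zero]
      module
  | pred n ih =>
      rw [sm_pred' (by omega : -(n:ℤ) ≤ 0), map_sub, dstar_single1, ih,
        if_pos (by omega : -(n:ℤ) ≤ 0), if_pos (by omega : -(n:ℤ)-1 ≤ 0),
        sgn_sub_one, y_pred' (by omega : -(n:ℤ)-1 ≤ 0), y_pred' (by omega : -(n:ℤ) ≤ 0)]
      simp only [bnd]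
      have h : (-(n:ℤ)-1+1) = -(n:ℤ) := by ring
      rw [h]
      module

/-- key identity for `op` generators -/
lemma dsp (k : ℤ) : dstar (sp k) =
    Finsupp.single (k,.op) 1 - (if 0 ≤ k then sgn k else 0) • gen1 - y k - y (k+1) := by
  induction k using Int.induction_on with
  | zero =>
      rw [sp_zero, map_zero, if_pos (le_refl (0:ℤ)), y_succ' (le_refl (0:ℤ))]
      norm_num [gen1]
  | succ n ih =>
      rw [sp_succ' (by omega : (0:ℤ) ≤ (n:ℤ)), map_sub, map_neg, dstar_single1, ih,
        if_pos (by omega : (0:ℤ) ≤ (n:ℤ)), if_pos (by omega : (0:ℤ) ≤ (n:ℤ)+1),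
        sgn_add_one, y_succ' (by omega : (0:ℤ) ≤ (n:ℤ)+1), y_succ' (by omega : (0:ℤ) ≤ (n:ℤ))]
      simp only [bnd]
      have h : ((n:ℤ)+1-1) = (n:ℤ) := by ring
      rw [h]
      module
  | pred n ih =>
      rw [sp_neg' (by omega), map_zero, if_neg (by omega)]
      have h : (-(n:ℤ)-1+1) = -(n:ℤ) := by ring
      rw [h, y_pred' (by omega : -(n:ℤ) ≤ 0)]
      module

/-- key identity for `o2` generators -/
lemma so2 (k : ℤ) : sm k + sm (k+1) - sp k - sp (k-1) = Finsupp.single (k,.o2) 1 := by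
  rcases lt_trichotomy k 0 with h | h | h
  · rw [sp_neg' (by omega), sp_neg' (by omega)]
    have h1 := sm_pred' (k := k+1) (by omega)
    have h2 : (k+1-1) = k := by ring
    rw [h2] at h1
    rw [h1]
    module
  · subst h
    rw [sm_zero, sm_pos' (by omega : (1:ℤ) ≤ 0+1), sp_zero, sp_neg' (by omega)]
    module
  · rw [sm_pos' (by omega), sm_pos' (by omega)]
    have h1 := sp_succ' (k := k-1) (by omega)
    have h2 : (k-1+1) = k := by ring
    rw [h2] at h1
    rw [h1]
    module

def sg : ℤ × OLabel → M
  | (k, .o0) => y k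
  | (k, .op) => sp k
  | (k, .om) => sm k
  | (_, .o2) => 0

def s : M →ₗ[ℤ] M := Finsupp.lift M ℤ (ℤ × OLabel) sg

lemma s_single1 (a : ℤ × OLabel) : s (Finsupp.single a 1) = sg a := by
  rw [s, lift_single]; module

def pg : ℤ × OLabel → ℤ × ℤ
  | (k, .o0) => (sgn k, 0)
  | (k, .op) => ((0:ℤ), if 0 ≤ k then sgn k else 0)
  | (k, .om) => ((0:ℤ), if k ≤ 0 then sgn k else 0)
  | (_, .o2) => 0

def p : M →ₗ[ℤ] ℤ × ℤ := Finsupp.lift (ℤ × ℤ) ℤ (ℤ × OLabel) pg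

lemma p_single1 (a : ℤ × OLabel) : p (Finsupp.single a 1) = pg a := by
  rw [p, lift_single]; module

def iota : ℤ × ℤ →ₗ[ℤ] M :=
  (LinearMap.toSpanSingleton ℤ M gen0).coprod (LinearMap.toSpanSingleton ℤ M gen1)

lemma iota_apply (a b : ℤ) : iota (a, b) = a • gen0 + b • gen1 := rfl

/-- the homotopy identity, as linear maps -/
lemma homotopy : (dstar ∘ₗ s) + (s ∘ₗ dstar) = LinearMap.id - iota ∘ₗ p := by
  apply Finsupp.lhom_ext
  intro a c
  have key : dstar (s (Finsupp.single a 1)) + s (dstar (Finsupp.single a 1))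
      = Finsupp.single a 1 - iota (p (Finsupp.single a 1)) := by
    rw [s_single1, dstar_single1, p_single1]
    obtain ⟨k, l⟩ := a
    cases l with
    | o0 =>
        show dstar (y k) + s 0 = _
        rw [map_zero, dy, pg, iota_apply, gen0]
        module
    | op =>
        show dstar (sp k) + s (bnd (k, .op)) = _
        rw [bnd, map_add, s_single1, s_single1, dsp, pg, iota_apply]
        show _ + (y k + y (k+1)) = _
        module
    | om =>
        show dstar (sm k) + s (bnd (k, .om)) = _
        rw [bnd, map_add, s_single1, s_single1, dsm, pg, iota_apply]
        show _ + (y k + y (k-1)) = _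
        module
    | o2 =>
        show dstar 0 + s (bnd (k, .o2)) = _
        rw [map_zero, bnd, map_sub, map_sub, map_add, s_single1, s_single1, s_single1, s_single1]
        show 0 + (sm k + sm (k+1) - sp k - sp (k-1)) = _
        rw [so2, pg, map_zero]
        module
  have h : (Finsupp.single a c : M) = c • Finsupp.single a 1 := by
    rw [Finsupp.smul_single, smul_eq_mul, mul_one]
  simp only [LinearMap.add_apply, LinearMap.sub_apply, LinearMap.comp_apply,
    LinearMap.id_apply, h, map_smul]
  rw [key]

/-- p kills boundaries -/
lemma p_bnd (a : ℤ × OLabel) : p (bnd a) = 0 := by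
  obtain ⟨k, l⟩ := a
  cases l with
  | o0 => show p 0 = 0; exact map_zero p
  | op =>
      show p (Finsupp.single (k,.o0) 1 + Finsupp.single (k+1,.o0) 1) = 0
      rw [map_add, p_single1, p_single1, pg, pg, sgn_add_one]
      ext <;> simp
  | om =>
      show p (Finsupp.single (k,.o0) 1 + Finsupp.single (k-1,.o0) 1) = 0
      rw [map_add, p_single1, p_single1, pg, pg, sgn_sub_one]
      ext <;> simp
  | o2 =>
      simp only [bnd, map_sub, map_add, p_single1, pg]
      rcases lt_trichotomy k 0 with h | h | h
      · rw [if_pos (by omega : k ≤ 0), if_neg (by omega : ¬ 0 ≤ k),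
          if_neg (by omega : ¬ 0 ≤ k - 1)]
        rw [if_pos (by omega : k+1 ≤ 0)]
        ext <;> simp [sgn_add_one]
      · subst h
        norm_num
      · rw [if_neg (by omega : ¬ k ≤ 0), if_neg (by omega : ¬ k+1 ≤ 0),
          if_pos (by omega : 0 ≤ k), if_pos (by omega : 0 ≤ k-1), sgn_sub_one]
        ext <;> simp

lemma p_dstar : p ∘ₗ dstar = 0 := by
  apply Finsupp.lhom_ext
  intro a c
  rw [LinearMap.comp_apply, dstar_single, map_smul, p_bnd, LinearMap.zero_apply, smul_zero]

lemma dstar_gen0 : dstar gen0 = 0 := by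
  rw [gen0, dstar_single1, bnd]

lemma dstar_gen1 : dstar gen1 = 0 := by
  rw [gen1, map_sub, dstar_single, dstar_single]
  simp [bnd]
  abel

lemma p_gen0 : p gen0 = (1, 0) := by
  rw [gen0, p_single1, pg, sgn_zero]

lemma p_gen1 : p gen1 = (0, 1) := by
  rw [gen1, map_sub, p_single1, p_single1, pg, pg,
    if_pos (le_refl (0:ℤ)), if_neg (by omega : ¬ (1:ℤ) ≤ 0), sgn_zero]
  ext <;> simp

lemma homotopy_apply (x : M) :
    dstar (s x) + s (dstar x) = x - iota (p x) := by
  have h := LinearMap.congr_fun homotopy x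
  simpa using h

lemma dstar_iota (v : ℤ × ℤ) : dstar (iota v) = 0 := by
  obtain ⟨a, b⟩ := v
  rw [iota_apply, map_add, map_smul, map_smul, dstar_gen0, dstar_gen1, smul_zero,
    smul_zero, add_zero]

lemma p_iota (v : ℤ × ℤ) : p (iota v) = v := by
  obtain ⟨a, b⟩ := v
  rw [iota_apply, map_add, map_smul, map_smul, p_gen0, p_gen1]
  ext <;> simp

/-- The homology of `(M, ∂_*)` is `ℤ ⊕ ℤ`, generated by the classes of `(0, o₀)` and
`(0, o₊) − (1, o₋)`.  In particular `(0, o₊) − (1, o₋)` is closed. -/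
theorem homology_of_dstar :
    dstar gen1 = 0 ∧
    ∀ (h0 : gen0 ∈ LinearMap.ker dstar) (h1 : gen1 ∈ LinearMap.ker dstar),
      ∃ e : (LinearMap.ker dstar ⧸
          (LinearMap.range dstar).comap (LinearMap.ker dstar).subtype) ≃ₗ[ℤ] ℤ × ℤ,
        e (Submodule.Quotient.mk
            (p := (LinearMap.range dstar).comap (LinearMap.ker dstar).subtype)
            ⟨gen0, h0⟩) = (1, 0) ∧
        e (Submodule.Quotient.mk
            (p := (LinearMap.range dstar).comap (LinearMap.ker dstar).subtype)
            ⟨gen1, h1⟩) = (0, 1) := by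
  refine ⟨dstar_gen1, ?_⟩
  intro h0 h1
  set N : Submodule ℤ (LinearMap.ker dstar) :=
    (LinearMap.range dstar).comap (LinearMap.ker dstar).subtype with hN
  set ψ : (LinearMap.ker dstar) →ₗ[ℤ] ℤ × ℤ := p ∘ₗ (LinearMap.ker dstar).subtype with hψ
  have hNle : N ≤ LinearMap.ker ψ := by
    rintro ⟨x, hx⟩ hmem
    obtain ⟨w, hw⟩ := hmem
    show p x = 0
    have hwx : dstar w = x := hw
    rw [← hwx]
    exact LinearMap.congr_fun p_dstar w
  have hkerle : LinearMap.ker ψ ≤ N := by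
    rintro ⟨x, hx⟩ hmem
    have hpx : p x = 0 := hmem
    have hdx : dstar x = 0 := hx
    have H := homotopy_apply x
    rw [hpx, hdx, map_zero, map_zero, add_zero, sub_zero] at H
    exact ⟨s x, H⟩
  have hsurj : Function.Surjective (Submodule.liftQ N ψ hNle) := by
    intro v
    have hmem : iota v ∈ LinearMap.ker dstar := by
      rw [LinearMap.mem_ker]; exact dstar_iota v
    refine ⟨Submodule.Quotient.mk ⟨iota v, hmem⟩, ?_⟩
    rw [Submodule.liftQ_apply]
    exact p_iota v
  have hinj : Function.Injective (Submodule.liftQ N ψ hNle) := by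
    rw [← LinearMap.ker_eq_bot]
    exact Submodule.ker_liftQ_eq_bot N ψ hNle hkerle
  refine ⟨LinearEquiv.ofBijective _ ⟨hinj, hsurj⟩, ?_, ?_⟩
  · show Submodule.liftQ N ψ hNle (Submodule.Quotient.mk ⟨gen0, h0⟩) = (1, 0)
    rw [Submodule.liftQ_apply]
    exact p_gen0
  · show Submodule.liftQ N ψ hNle (Submodule.Quotient.mk ⟨gen1, h1⟩) = (0, 1)
    rw [Submodule.liftQ_apply]
    exact p_gen1
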